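/- Let M be a 2t × 2t matrix over Z_m whose t × t top-left block is A, whose t × t bottom-right block is B, and whose t × t top-right block is the zero matrix (the bottom-left block is arbitrary). Then colrank(A) + colrank(B) ≤ colrank(M). -/

import Mathlib

/-- The column rank of a square matrix over `ZMod m` (with arbitrary index type):
`log_m` of the size of the additive subgroup generated by the columns of `M`. -/
noncomputable def colrank {m : ℕ} {ι : Type} (M : Matrix ι ι (ZMod m)) : ℝ :=
  Real.logb (m : ℝ)
    (((AddSubgroup.closure (Set.range fun j => fun i => M i j) :
      AddSubgroup (ι → ZMod m)) : Set (ι → ZMod m)).ncard : ℝ)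

/-- Claim 4.6: for a block lower-triangular matrix `[[A, 0], [C, B]]`,
`colrank(A) + colrank(B) ≤ colrank(M)`. -/
theorem colrank_block_triangular (m t : ℕ) (hm : 2 ≤ m)
    (A B C : Matrix (Fin t) (Fin t) (ZMod m)) :
    colrank A + colrank B ≤ colrank (Matrix.fromBlocks A 0 C B) := by
  haveI : NeZero m := ⟨by omega⟩
  set M := Matrix.fromBlocks A 0 C B with hM
  set GA : AddSubgroup (Fin t → ZMod m) :=
    AddSubgroup.closure (Set.range fun j => fun i => A i j) with hGA
  set GB : AddSubgroup (Fin t → ZMod m) :=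
    AddSubgroup.closure (Set.range fun j => fun i => B i j) with hGB
  set H : AddSubgroup (Fin t ⊕ Fin t → ZMod m) :=
    AddSubgroup.closure (Set.range fun j => fun i => M i j) with hH
  -- projection onto the first block
  let p1 : (Fin t ⊕ Fin t → ZMod m) →+ (Fin t → ZMod m) :=
    { toFun := fun x i => x (Sum.inl i)
      map_zero' := rfl
      map_add' := fun _ _ => rfl }
  -- embedding of the second block
  let j2 : (Fin t → ZMod m) →+ (Fin t ⊕ Fin t → ZMod m) :=
    { toFun := fun x => Sum.elim 0 x
      map_zero' := by ext i; cases i <;> rfl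
      map_add' := fun x y => by ext i; cases i <;> simp }
  have hj2inj : Function.Injective j2 := by
    intro x y h
    funext i
    have := congrFun h (Sum.inr i)
    exact this
  let f : H →+ (Fin t → ZMod m) := p1.comp H.subtype
  -- card H = card (H/ker f) * card (ker f) = card (range f) * card (ker f)
  have hcard : Nat.card H = Nat.card f.range * Nat.card f.ker := by
    rw [AddSubgroup.card_eq_card_quotient_mul_card_addSubgroup f.ker]
    congr 1
    exact Nat.card_congr (QuotientAddGroup.quotientKerEquivRange f).toEquiv
  -- GA injects into range f
  have hGAle : Nat.card GA ≤ Nat.card f.range := by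
    have hmap : H.map p1 = AddSubgroup.closure (p1 '' Set.range fun j i => M i j) := by
      rw [hH, AddMonoidHom.map_closure]
    have hle : GA ≤ H.map p1 := by
      rw [hmap]
      apply AddSubgroup.closure_mono
      rintro _ ⟨j, rfl⟩
      exact ⟨fun i => M i (Sum.inl j), ⟨Sum.inl j, rfl⟩, rfl⟩
    have : ∀ a : GA, (a : Fin t → ZMod m) ∈ f.range := by
      intro a
      obtain ⟨x, hx, hpx⟩ := hle a.2
      exact ⟨⟨x, hx⟩, hpx⟩
    have hinj : Function.Injective (fun a : GA => (⟨(a : Fin t → ZMod m), this a⟩ : f.range)) := by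
      intro a b hab
      simp only [Subtype.mk.injEq] at hab
      exact Subtype.ext hab
    exact Nat.card_le_card_of_injective _ hinj
  -- GB injects into ker f
  have hGBle : Nat.card GB ≤ Nat.card f.ker := by
    have hmem : ∀ b : GB, j2 (b : Fin t → ZMod m) ∈ H := by
      intro b
      have hle : GB.map j2 ≤ H := by
        rw [hGB, AddMonoidHom.map_closure]
        apply (AddSubgroup.closure_le _).2
        rintro _ ⟨_, ⟨j, rfl⟩, rfl⟩
        have : j2 (fun i => B i j) = (fun i => M i (Sum.inr j)) := by
          funext i; cases i <;> rfl
        rw [this]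
        exact AddSubgroup.subset_closure ⟨Sum.inr j, rfl⟩
      exact hle ⟨b, b.2, rfl⟩
    have hker : ∀ b : GB, (⟨j2 (b : Fin t → ZMod m), hmem b⟩ : H) ∈ f.ker := by
      intro b
      simp only [AddMonoidHom.mem_ker]
      rfl
    have hinj : Function.Injective
        (fun b : GB => (⟨⟨j2 (b : Fin t → ZMod m), hmem b⟩, hker b⟩ : f.ker)) := by
      intro a b hab
      simp only [Subtype.mk.injEq] at hab
      exact Subtype.ext (hj2inj hab)
    exact Nat.card_le_card_of_injective _ hinj
  have hmain : Nat.card GA * Nat.card GB ≤ Nat.card H := by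
    rw [hcard]; exact Nat.mul_le_mul hGAle hGBle
  -- translate to ncard and logb
  have hb : (1 : ℝ) < (m : ℝ) := by exact_mod_cast by omega
  have hncA : ((GA : Set (Fin t → ZMod m)).ncard) = Nat.card GA :=
    Nat.card_coe_set_eq _ |>.symm
  have hncB : ((GB : Set (Fin t → ZMod m)).ncard) = Nat.card GB :=
    Nat.card_coe_set_eq _ |>.symm
  have hncH : ((H : Set (Fin t ⊕ Fin t → ZMod m)).ncard) = Nat.card H :=
    Nat.card_coe_set_eq _ |>.symm
  have hApos : 0 < Nat.card GA := Nat.card_pos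
  have hBpos : 0 < Nat.card GB := Nat.card_pos
  unfold colrank
  rw [hncA, hncB, hncH]
  rw [← Real.logb_mul (by exact_mod_cast hApos.ne') (by exact_mod_cast hBpos.ne')]
  apply Real.logb_le_logb_of_le hb (by positivity)
  exact_mod_cast hmain
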